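/- Let Σ' be the stellar subdivision of the tetrahedron boundary at all four facets, realized in ℝ³ with the original vertices 1,2,3,4 in general position in the plane z = 0 and the new vertices 1',2',3',4' off that plane (each new vertex in the affine span condition for properness). If the Artinian reduction A*(Σ') (with respect to the linear system of parameters given by the coordinates) satisfied the Lefschetz property in degree 1 for some ℓ ∈ A¹(Σ'), i.e., ·ℓ : A¹(Σ') → A²(Σ') is an isomorphism, then the induced multiplication ·ℓ : A¹(Δ) → A²(Δ) on the quotient A*(Δ), Δ = K₄ realized in the plane, would be surjective; since dim A¹(Δ) = 2 and dim A²(Δ) = 3, this is a contradiction. Hence A*(Σ') has no Lefschetz element in degree 1. -/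
import Mathlib


open MvPolynomial

/-- Facets of the stellar subdivision Σ' of the tetrahedron boundary at all four
triangles.  Vertices 0,1,2,3 are the original vertices, 4,5,6,7 the new ones. -/
def spFacets : Finset (Finset (Fin 8)) :=
  {{1,2,4},{1,3,4},{2,3,4},{0,2,5},{0,3,5},{2,3,5},
   {0,1,6},{0,3,6},{1,3,6},{0,1,7},{0,2,7},{1,2,7}}

/-- The simplicial complex Σ'. -/
def spComplex : Finset (Finset (Fin 8)) :=
  Finset.univ.filter (fun s => s ≠ ∅ ∧ ∃ f ∈ spFacets, s ⊆ f)

set_option maxRecDepth 10000 in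
private lemma sp_small : ∀ s : Finset (Fin 8), (∀ i ∈ s, i.val < 4) → s ≠ ∅ →
    s ∉ spComplex → 3 ≤ s.card := by decide

/-- A finsupp of degree 1 is a single. -/
private lemma exists_single {d : Fin 8 →₀ ℕ} (hd : Finsupp.degree d = 1) :
    ∃ i, d = Finsupp.single i 1 := by
  have h0 : d ≠ 0 := by
    rintro rfl; simp at hd
  obtain ⟨i, hi⟩ := Finsupp.support_nonempty_iff.mpr h0
  have hi1 : 1 ≤ d i := Nat.one_le_iff_ne_zero.mpr (Finsupp.mem_support_iff.mp hi)
  refine ⟨i, ?_⟩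
  have hle : d i ≤ Finsupp.degree d := Finsupp.le_degree i d
  have hdi : d i = 1 := le_antisymm (hd ▸ hle) hi1
  ext j
  by_cases hj : j = i
  · subst hj; simp [hdi]
  · have hj0 : d j = 0 := by
      by_contra hne
      have hjmem : j ∈ d.support := Finsupp.mem_support_iff.mpr hne
      have hsub : ({i, j} : Finset (Fin 8)) ⊆ d.support := by
        intro x hx
        simp only [Finset.mem_insert, Finset.mem_singleton] at hx
        rcases hx with rfl | rfl <;> assumption
      have hsum : d i + d j ≤ Finsupp.degree d := by
        have := Finset.sum_le_sum_of_subset hsub (f := fun x => d x)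
        rwa [Finset.sum_pair (fun h => hj (h.symm)) ] at this
      omega
    simp [Finsupp.single_apply, Ne.symm hj, hj0]

theorem stmt_12 (v : Fin 8 → Fin 3 → ℝ)
    (hplane : ∀ i : Fin 8, i.val < 4 → v i 2 = 0)
    (hgen : ∀ i j k : Fin 8, i.val < 4 → j.val < 4 → k.val < 4 →
      i ≠ j → i ≠ k → j ≠ k → AffineIndependent ℝ ![v i, v j, v k])
    (hoff : ∀ i : Fin 8, 4 ≤ i.val → v i 2 ≠ 0)
    (I : Ideal (MvPolynomial (Fin 8) ℝ))
    (hI : I = Ideal.span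
      ({p | ∃ s : Finset (Fin 8), s ∉ spComplex ∧ s ≠ ∅ ∧ p = ∏ i ∈ s, X i} ∪
       {p | ∃ j : Fin 3, p = ∑ i : Fin 8, C (v i j) * X i}))
    (A : ℕ → Submodule ℝ (MvPolynomial (Fin 8) ℝ ⧸ I))
    (hA : ∀ k, A k = Submodule.map (Ideal.Quotient.mkₐ ℝ I).toLinearMap
      (homogeneousSubmodule (Fin 8) ℝ k)) :
    ¬ ∃ ℓ ∈ A 1,
        (∀ x ∈ A 1, ℓ * x = 0 → x = 0) ∧
        (∀ y ∈ A 2, ∃ x ∈ A 1, ℓ * x = y) := by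
  rintro ⟨ℓ, hℓA, -, hsurj⟩
  rw [hA 1] at hℓA
  obtain ⟨l, hl1, rfl⟩ := hℓA
  rw [SetLike.mem_coe, mem_homogeneousSubmodule] at hl1
  -- the coefficient functional of the degree-1 polynomial l
  set lam : Fin 8 → ℝ := fun i => coeff (Finsupp.single i 1) l with hlam
  -- a 3×4 matrix of linear conditions
  set M : Matrix (Fin 3) (Fin 4) ℝ :=
    Matrix.of ![![v 0 0, v 1 0, v 2 0, v 3 0],
      ![v 0 1, v 1 1, v 2 1, v 3 1],
      ![lam 0, lam 1, lam 2, lam 3]] with hM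
  -- find a nonzero vector in the kernel
  have hninj : ¬ Function.Injective M.mulVecLin := by
    intro hinj
    have h43 := LinearMap.finrank_le_finrank_of_injective hinj
    simp [Module.finrank_pi] at h43
  rw [Function.not_injective_iff] at hninj
  obtain ⟨y1, y2, hy12, hyne⟩ := hninj
  set y : Fin 4 → ℝ := y1 - y2 with hy
  have hy0 : y ≠ 0 := sub_ne_zero.mpr hyne
  have hTy : M.mulVecLin y = 0 := by rw [hy, map_sub, hy12, sub_self]
  set z : Fin 8 → ℝ := fun i => if h : i.val < 4 then y ⟨i.val, h⟩ else 0 with hz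
  have hzlit : z 0 = y 0 ∧ z 1 = y 1 ∧ z 2 = y 2 ∧ z 3 = y 3 ∧
      z 4 = 0 ∧ z 5 = 0 ∧ z 6 = 0 ∧ z 7 = 0 := by
    exact ⟨rfl, rfl, rfl, rfl, rfl, rfl, rfl, rfl⟩
  obtain ⟨hz0, hz1', hz2', hz3', hz4, hz5, hz6, hz7⟩ := hzlit
  have hrow : ∀ j : Fin 3, M.mulVec y j = 0 := fun j => by
    have := congrFun hTy j; simpa using this
  have hrow0 : v 0 0 * y 0 + v 1 0 * y 1 + v 2 0 * y 2 + v 3 0 * y 3 = 0 := by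
    have := hrow 0
    simp [hM, Matrix.mulVec, dotProduct, Fin.sum_univ_four] at this
    linarith
  have hrow1 : v 0 1 * y 0 + v 1 1 * y 1 + v 2 1 * y 2 + v 3 1 * y 3 = 0 := by
    have := hrow 1
    simp [hM, Matrix.mulVec, dotProduct, Fin.sum_univ_four] at this
    linarith
  have hrow2 : lam 0 * y 0 + lam 1 * y 1 + lam 2 * y 2 + lam 3 * y 3 = 0 := by
    have := hrow 2
    simp [hM, Matrix.mulVec, dotProduct, Fin.sum_univ_four] at this
    linarith
  -- the key conditions on z
  have hzv : ∀ j : Fin 3, ∑ i : Fin 8, v i j * z i = 0 := by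
    intro j
    rw [Fin.sum_univ_eight, hz0, hz1', hz2', hz3', hz4, hz5, hz6, hz7]
    have hj : j = 0 ∨ j = 1 ∨ j = 2 := by
      rcases j with ⟨jv, hjv⟩
      interval_cases jv
      · exact Or.inl rfl
      · exact Or.inr (Or.inl rfl)
      · exact Or.inr (Or.inr rfl)
    rcases hj with rfl | rfl | rfl
    · simpa using hrow0
    · simpa using hrow1
    · rw [hplane 0 (by decide), hplane 1 (by decide), hplane 2 (by decide),
        hplane 3 (by decide)]
      ring
  have hzlam : ∑ i : Fin 8, lam i * z i = 0 := by
    rw [Fin.sum_univ_eight, hz0, hz1', hz2', hz3', hz4, hz5, hz6, hz7]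
    simpa using hrow2
  -- the test functional: substitute X i ↦ z i • X and take the coefficient of X^2
  set h : MvPolynomial (Fin 8) ℝ →+* Polynomial ℝ :=
    eval₂Hom (Polynomial.C) (fun i => Polynomial.C (z i) * Polynomial.X) with hh
  -- image of products of variables
  have hmono : ∀ s : Finset (Fin 8),
      h (∏ i ∈ s, X i) = Polynomial.C (∏ i ∈ s, z i) * Polynomial.X ^ s.card := by
    intro s
    rw [map_prod]
    simp only [hh, eval₂Hom_X']
    rw [Finset.prod_mul_distrib, ← map_prod (Polynomial.C : ℝ →+* Polynomial ℝ),
      Finset.prod_const]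
  -- image of linear combinations of variables
  have hlin : ∀ c : Fin 8 → ℝ, h (∑ i : Fin 8, C (c i) * X i) =
      Polynomial.C (∑ i : Fin 8, c i * z i) * Polynomial.X := by
    intro c
    rw [map_sum, map_sum (Polynomial.C : ℝ →+* Polynomial ℝ), Finset.sum_mul]
    refine Finset.sum_congr rfl fun i _ => ?_
    simp only [hh, map_mul, eval₂Hom_C, eval₂Hom_X', Polynomial.C_mul, mul_assoc]
  -- the functional kills I
  have hIkill : ∀ g ∈ I, (h g).coeff 2 = 0 := by
    have hKset : ∀ p ∈
        ({p | ∃ s : Finset (Fin 8), s ∉ spComplex ∧ s ≠ ∅ ∧ p = ∏ i ∈ s, X i} ∪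
         {p | ∃ j : Fin 3, p = ∑ i : Fin 8, C (v i j) * X i} :
         Set (MvPolynomial (Fin 8) ℝ)),
        ∀ r : MvPolynomial (Fin 8) ℝ, (h (r * p)).coeff 2 = 0 := by
      rintro p (⟨s, hs, hsne, rfl⟩ | ⟨j, rfl⟩) <;> intro r
      · by_cases hb : ∀ i ∈ s, (i : Fin 8).val < 4
        · have hcard : 3 ≤ s.card := sp_small s hb hsne hs
          rw [map_mul, hmono s, ← mul_assoc, Polynomial.coeff_mul_X_pow']
          rw [if_neg (by omega)]
        · push_neg at hb
          obtain ⟨i, his, hi4⟩ := hb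
          have hzi : z i = 0 := by
            simp only [hz]
            rw [dif_neg (by omega)]
          rw [map_mul, hmono s, Finset.prod_eq_zero his hzi]
          simp
      · rw [map_mul, hlin (fun i => v i j), hzv j]
        simp
    intro g hg
    rw [hI] at hg
    -- the set of f such that Φ(r f) = 0 for all r is an ideal
    let K : Ideal (MvPolynomial (Fin 8) ℝ) :=
      { carrier := {f | ∀ r, (h (r * f)).coeff 2 = 0}
        add_mem' := fun {a b} ha hb r => by
          rw [mul_add, map_add, Polynomial.coeff_add, ha r, hb r, add_zero]
        zero_mem' := fun r => by simp
        smul_mem' := fun c f hf r => by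
          simpa [smul_eq_mul, ← mul_assoc] using hf (r * c) }
    have hle : Ideal.span _ ≤ K := Ideal.span_le.mpr hKset
    have := hle hg 1
    simpa using this
  -- the polynomial l is a linear combination of the variables
  have hdecomp : l = ∑ i : Fin 8, (C (lam i) * X i : MvPolynomial (Fin 8) ℝ) := by
    apply MvPolynomial.ext
    intro d
    rw [coeff_sum]
    simp only [coeff_C_mul, coeff_X']
    by_cases hd : ∃ i : Fin 8, d = Finsupp.single i 1
    · obtain ⟨i, rfl⟩ := hd
      rw [Finset.sum_eq_single i]
      · rw [if_pos rfl, mul_one, hlam]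
      · intro j _ hji
        rw [if_neg, mul_zero]
        intro hEq
        exact hji (Finsupp.single_left_injective one_ne_zero hEq)
      · intro habs; exact absurd (Finset.mem_univ i) habs
    · have h0 : coeff d l = 0 := by
        by_contra hne
        have hdeg : Finsupp.degree d = 1 := by
          rw [Finsupp.degree_eq_weight_one]
          exact hl1 hne
        obtain ⟨i, rfl⟩ := exists_single hdeg
        exact hd ⟨i, rfl⟩
      rw [h0]
      refine (Finset.sum_eq_zero fun i _ => ?_).symm
      rw [if_neg, mul_zero]
      intro hEq
      exact hd ⟨i, hEq.symm⟩
  -- hence h l = 0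
  have hl0 : h l = 0 := by
    conv_lhs => rw [hdecomp]
    rw [hlin lam, hzlam]
    simp
  -- find a coordinate where z is nonzero
  have hex : ∃ i0 : Fin 8, z i0 ≠ 0 := by
    by_contra hall
    push_neg at hall
    apply hy0
    funext j
    have h4 : (j : ℕ) < 4 := j.isLt
    have hthis := hall ⟨j.val, by omega⟩
    simp only [hz] at hthis
    rw [dif_pos (by simpa using h4)] at hthis
    simpa using hthis
  obtain ⟨i0, hi0⟩ := hex
  -- the quadratic test polynomial
  set q : MvPolynomial (Fin 8) ℝ := X i0 * X i0 with hq
  have hq2 : q ∈ homogeneousSubmodule (Fin 8) ℝ 2 := by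
    rw [mem_homogeneousSubmodule]
    exact (isHomogeneous_X ℝ i0).mul (isHomogeneous_X ℝ i0)
  have hqA : (Ideal.Quotient.mkₐ ℝ I) q ∈ A 2 := by
    rw [hA 2]
    exact ⟨q, hq2, rfl⟩
  obtain ⟨x, hxA, hx⟩ := hsurj _ hqA
  rw [hA 1] at hxA
  obtain ⟨p, hp1, rfl⟩ := hxA
  -- q - l * p ∈ I
  have hmem : l * p - q ∈ I := by
    rw [← Ideal.Quotient.eq_zero_iff_mem, map_sub, sub_eq_zero]
    have : (Ideal.Quotient.mk I) (l * p) = (Ideal.Quotient.mkₐ ℝ I) (l * p) := rfl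
    rw [this, map_mul]
    exact hx
  have hkilled := hIkill _ hmem
  rw [map_sub, map_mul, hl0, zero_mul, zero_sub, Polynomial.coeff_neg, neg_eq_zero] at hkilled
  -- but Φ(q) = z i0 ^ 2 ≠ 0
  rw [hq, map_mul] at hkilled
  simp only [hh, eval₂Hom_X'] at hkilled
  have hval : ((Polynomial.C (z i0) * Polynomial.X) *
      (Polynomial.C (z i0) * Polynomial.X)).coeff 2 = z i0 * z i0 := by
    rw [mul_mul_mul_comm, ← Polynomial.C_mul, Polynomial.coeff_C_mul,
      ← pow_two Polynomial.X, Polynomial.coeff_X_pow, if_pos rfl, mul_one]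
  rw [hval] at hkilled
  exact hi0 (mul_self_eq_zero.mp hkilled)
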